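/- Let λ > 0, c > 0, and let q : (0,∞) → [0,∞) be a measurable function with ∫_0^∞ q(τ) dτ = 1. Define p(x) = (λ/(2πc)) ∫_{‖x‖/c}^∞ e^{-λτ} exp((λ/c)√(c²τ² - ‖x‖²)) / √(c²τ² - ‖x‖²) · q(τ) dτ for x ∈ ℝ². Then ∫_{ℝ²} p(x) dx = 1 - ∫_0^∞ e^{-λτ} q(τ) dτ. -/

import Mathlib

open MeasureTheory Real Set

set_option maxHeartbeats 1000000

lemma radial_aux (lam c τ : ℝ) (hlam : 0 < lam) (hc : 0 < c) (hτ : 0 < τ) :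
    IntegrableOn (fun r => r * (Real.exp ((lam / c) * Real.sqrt (c ^ 2 * τ ^ 2 - r ^ 2)) /
        Real.sqrt (c ^ 2 * τ ^ 2 - r ^ 2))) (Ioo 0 (c * τ)) ∧
      ∫ r in Ioo 0 (c * τ), r * (Real.exp ((lam / c) * Real.sqrt (c ^ 2 * τ ^ 2 - r ^ 2)) /
        Real.sqrt (c ^ 2 * τ ^ 2 - r ^ 2)) = (c / lam) * (Real.exp (lam * τ) - 1) := by
  have hct : 0 < c * τ := mul_pos hc hτ
  set G : ℝ → ℝ := fun r => -(c / lam) * Real.exp ((lam / c) * Real.sqrt (c ^ 2 * τ ^ 2 - r ^ 2))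
    with hG
  set φ : ℝ → ℝ := fun r => r * (Real.exp ((lam / c) * Real.sqrt (c ^ 2 * τ ^ 2 - r ^ 2)) /
        Real.sqrt (c ^ 2 * τ ^ 2 - r ^ 2)) with hφ
  have hGcont : Continuous G := by
    apply continuous_const.mul
    exact (Real.continuous_exp.comp
      (continuous_const.mul ((continuous_const.sub (continuous_pow 2)).sqrt)))
  have hderiv : ∀ r ∈ Ioo 0 (c * τ), HasDerivAt G (φ r) r := by
    intro r hr
    have hpos : 0 < c ^ 2 * τ ^ 2 - r ^ 2 := by nlinarith [hr.1, hr.2]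
    have hs : Real.sqrt (c ^ 2 * τ ^ 2 - r ^ 2) ≠ 0 := by positivity
    have h1 : HasDerivAt (fun r : ℝ => c ^ 2 * τ ^ 2 - r ^ 2) (-(2 * r)) r := by
      simpa using ((hasDerivAt_pow 2 r).const_sub (c ^ 2 * τ ^ 2))
    have h2 := h1.sqrt hpos.ne'
    have h3 := (h2.const_mul (lam / c)).exp
    have h4 := h3.const_mul (-(c / lam))
    refine h4.congr_deriv ?_
    simp only [hφ]
    field_simp
  have hnn : ∀ r ∈ Ioo 0 (c * τ), 0 ≤ φ r := by
    intro r hr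
    have h5 := Real.sqrt_nonneg (c ^ 2 * τ ^ 2 - r ^ 2)
    have h6 := (Real.exp_pos ((lam / c) * Real.sqrt (c ^ 2 * τ ^ 2 - r ^ 2))).le
    exact mul_nonneg hr.1.le (div_nonneg h6 h5)
  have hintIoc : IntegrableOn φ (Ioc 0 (c * τ)) :=
    intervalIntegral.integrableOn_deriv_of_nonneg hGcont.continuousOn hderiv hnn
  have hint : IntegrableOn φ (Ioo 0 (c * τ)) := hintIoc.mono_set Ioo_subset_Ioc_self
  refine ⟨hint, ?_⟩
  have hii : IntervalIntegrable φ volume 0 (c * τ) :=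
    (intervalIntegrable_iff_integrableOn_Ioo_of_le hct.le).2 hint
  have hftc := intervalIntegral.integral_eq_sub_of_hasDeriv_right_of_le hct.le
    hGcont.continuousOn (fun x hx => (hderiv x hx).hasDerivWithinAt) hii
  rw [intervalIntegral.integral_of_le hct.le, integral_Ioc_eq_integral_Ioo] at hftc
  rw [hftc]
  have e1 : c ^ 2 * τ ^ 2 - (c * τ) ^ 2 = 0 := by ring
  have e2 : Real.sqrt (c ^ 2 * τ ^ 2 - 0 ^ 2) = c * τ := by
    rw [show c ^ 2 * τ ^ 2 - 0 ^ 2 = (c * τ) ^ 2 by ring, Real.sqrt_sq hct.le]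
  simp only [hG, e1, e2, Real.sqrt_zero, mul_zero, Real.exp_zero]
  have e3 : lam / c * (c * τ) = lam * τ := by field_simp
  rw [e3]
  ring

theorem stmt3 (lam c : ℝ) (hlam : 0 < lam) (hc : 0 < c)
    (q : ℝ → ℝ) (hq_meas : Measurable q) (hq_nonneg : ∀ τ ∈ Ioi (0 : ℝ), 0 ≤ q τ)
    (hq_int : ∫ τ in Ioi (0 : ℝ), q τ = 1)
    (p : EuclideanSpace ℝ (Fin 2) → ℝ)
    (hp : ∀ x, p x = (lam / (2 * π * c)) *
        ∫ τ in Ioi (‖x‖ / c),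
          Real.exp (-lam * τ) *
            (Real.exp ((lam / c) * Real.sqrt (c ^ 2 * τ ^ 2 - ‖x‖ ^ 2)) /
              Real.sqrt (c ^ 2 * τ ^ 2 - ‖x‖ ^ 2)) * q τ) :
    ∫ x : EuclideanSpace ℝ (Fin 2), p x
      = 1 - ∫ τ in Ioi (0 : ℝ), Real.exp (-lam * τ) * q τ := by
  classical
  have hc' : c ≠ 0 := hc.ne'
  have hlam' : lam ≠ 0 := hlam.ne'
  set φ : ℝ → ℝ → ℝ := fun r τ => Real.exp (-lam * τ) *
      (Real.exp ((lam / c) * Real.sqrt (c ^ 2 * τ ^ 2 - r ^ 2)) /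
        Real.sqrt (c ^ 2 * τ ^ 2 - r ^ 2)) * q τ with hφdef
  set g : ℝ → ℝ := fun r => ∫ τ in Ioi (r / c), φ r τ with hgdef
  -- integrability of q and exp * q
  have hqi : IntegrableOn q (Ioi 0) := by
    by_contra h
    rw [MeasureTheory.integral_undef h] at hq_int; norm_num at hq_int
  have hexpm : Measurable fun τ : ℝ => Real.exp (-lam * τ) * q τ :=
    ((measurable_id.const_mul (-lam)).exp).mul hq_meas
  have hexpqi : IntegrableOn (fun τ => Real.exp (-lam * τ) * q τ) (Ioi 0) := by
    refine Integrable.mono hqi hexpm.aestronglyMeasurable ?_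
    refine (ae_restrict_iff' measurableSet_Ioi).2 (ae_of_all _ fun τ hτ => ?_)
    rw [Real.norm_eq_abs, Real.norm_eq_abs, abs_mul, Real.abs_exp]
    have h1 : Real.exp (-lam * τ) ≤ 1 := by
      rw [Real.exp_le_one_iff]
      have : (0:ℝ) < τ := hτ
      nlinarith
    nlinarith [abs_nonneg (q τ), Real.exp_pos (-lam * τ)]
  -- measurability of φ on the product
  have hφm : Measurable fun pr : ℝ × ℝ => φ pr.1 pr.2 := by
    have hcs : Continuous fun pr : ℝ × ℝ => Real.sqrt (c ^ 2 * pr.2 ^ 2 - pr.1 ^ 2) :=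
      ((continuous_const.mul (continuous_snd.pow 2)).sub (continuous_fst.pow 2)).sqrt
    exact (((measurable_snd.const_mul (-lam)).exp).mul
      ((Real.continuous_exp.comp (continuous_const.mul hcs)).measurable.div hcs.measurable)).mul
      (hq_meas.comp measurable_snd)
  -- nonnegativity of φ on the relevant region
  have hφnn : ∀ r : ℝ, 0 ≤ r → ∀ τ ∈ Ioi (r / c), 0 ≤ φ r τ := by
    intro r hr τ hτ
    have hτ0 : 0 < τ := lt_of_le_of_lt (by positivity) hτ
    exact mul_nonneg (mul_nonneg (Real.exp_pos _).le
      (div_nonneg (Real.exp_pos _).le (Real.sqrt_nonneg _))) (hq_nonneg τ hτ0)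
  -- the ENNReal-valued kernel
  set F : ℝ × ℝ → ENNReal := fun pr =>
    (Ioi (pr.1 / c)).indicator (fun τ => ENNReal.ofReal (φ pr.1 τ)) pr.2 with hFdef
  have hFm : Measurable F := by
    have h1 : F = fun pr : ℝ × ℝ =>
        {s : ℝ × ℝ | s.1 / c < s.2}.indicator (fun s => ENNReal.ofReal (φ s.1 s.2)) pr := by
      funext pr
      simp [hFdef, Set.indicator_apply, mem_Ioi, mem_setOf_eq]
    rw [h1]
    exact (hφm.ennreal_ofReal).indicator (measurableSet_lt (measurable_fst.div_const c) measurable_snd)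
  set M : ℝ → ENNReal := fun r => ∫⁻ τ in Ioi 0, F (r, τ) with hMdef
  have hMm : Measurable M := Measurable.lintegral_prod_right hFm
  -- g in terms of M
  have hgM : ∀ r ∈ Ioi (0:ℝ), g r = (M r).toReal := by
    intro r hr
    have hr0 : (0:ℝ) < r := hr
    have hrc : (0:ℝ) ≤ r / c := div_nonneg hr0.le hc.le
    have h1 : M r = ∫⁻ τ in Ioi (r / c), ENNReal.ofReal (φ r τ) := by
      calc M r = ∫⁻ τ in Ioi 0, (Ioi (r / c)).indicator (fun τ => ENNReal.ofReal (φ r τ)) τ := rfl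
        _ = ∫⁻ τ in Ioi (r / c), ENNReal.ofReal (φ r τ) := by
            rw [lintegral_indicator measurableSet_Ioi,
              Measure.restrict_restrict measurableSet_Ioi,
              Set.inter_eq_left.2 (Ioi_subset_Ioi hrc)]
    rw [hgdef]
    simp only []
    rw [integral_eq_lintegral_of_nonneg_ae, h1]
    · exact (ae_restrict_iff' measurableSet_Ioi).2 (ae_of_all _ fun τ hτ => hφnn r hr.le τ hτ)
    · exact ((hφm.comp (measurable_const.prodMk measurable_id)).aestronglyMeasurable)
  -- per-τ computation
  have hinner : ∀ τ ∈ Ioi (0:ℝ), (∫⁻ r in Ioi 0, ENNReal.ofReal r * F (r, τ))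
      = ENNReal.ofReal ((c / lam) * ((1 - Real.exp (-lam * τ)) * q τ)) := by
    intro τ hτ
    have hτ0 : (0:ℝ) < τ := hτ
    have hct : 0 < c * τ := mul_pos hc hτ0
    obtain ⟨hintψ, hvalψ⟩ := radial_aux lam c τ hlam hc hτ0
    -- rewrite the integrand as an indicator in r
    have h2 : ∀ r ∈ Ioi (0:ℝ), ENNReal.ofReal r * F (r, τ)
        = (Iio (c * τ)).indicator (fun r => ENNReal.ofReal (r * φ r τ)) r := by
      intro r hr
      have hr0 : (0:ℝ) < r := hr
      have hiff : τ ∈ Ioi (r / c) ↔ r ∈ Iio (c * τ) := by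
        rw [mem_Ioi, mem_Iio, div_lt_iff₀ hc, mul_comm]
      simp only [hFdef, Set.indicator_apply]
      by_cases h : r ∈ Iio (c * τ)
      · rw [if_pos (hiff.2 h), if_pos h, ← ENNReal.ofReal_mul hr0.le]
      · rw [if_neg (fun hh => h (hiff.1 hh)), if_neg h, mul_zero]
    rw [setLIntegral_congr_fun measurableSet_Ioi h2]
    rw [lintegral_indicator measurableSet_Iio, Measure.restrict_restrict measurableSet_Iio,
      Set.Iio_inter_Ioi]
    -- now a real integral
    have hψeq : ∀ r : ℝ, r * φ r τ = (Real.exp (-lam * τ) * q τ) *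
        (r * (Real.exp ((lam / c) * Real.sqrt (c ^ 2 * τ ^ 2 - r ^ 2)) /
          Real.sqrt (c ^ 2 * τ ^ 2 - r ^ 2))) := by
      intro r; simp only [hφdef]; ring
    have hintc : IntegrableOn (fun r => r * φ r τ) (Ioo 0 (c * τ)) := by
      have := hintψ.const_mul (Real.exp (-lam * τ) * q τ)
      exact (integrable_congr (ae_of_all _ fun r => (hψeq r).symm)).1 this
    have hnnc : 0 ≤ᵐ[volume.restrict (Ioo 0 (c * τ))] fun r => r * φ r τ := by
      refine (ae_restrict_iff' measurableSet_Ioo).2 (ae_of_all _ fun r hr => ?_)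
      have : r / c < τ := by rw [div_lt_iff₀ hc, mul_comm]; exact hr.2
      exact mul_nonneg hr.1.le (hφnn r hr.1.le τ this)
    rw [← ofReal_integral_eq_lintegral_ofReal hintc hnnc]
    congr 1
    calc ∫ r in Ioo 0 (c * τ), r * φ r τ
        = ∫ r in Ioo 0 (c * τ), (Real.exp (-lam * τ) * q τ) *
            (r * (Real.exp ((lam / c) * Real.sqrt (c ^ 2 * τ ^ 2 - r ^ 2)) /
              Real.sqrt (c ^ 2 * τ ^ 2 - r ^ 2))) := by
          exact setIntegral_congr_fun measurableSet_Ioo fun r _ => hψeq r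
      _ = (Real.exp (-lam * τ) * q τ) * ((c / lam) * (Real.exp (lam * τ) - 1)) := by
          rw [integral_const_mul, hvalψ]
      _ = (c / lam) * ((1 - Real.exp (-lam * τ)) * q τ) := by
          have he : Real.exp (-lam * τ) * (Real.exp (lam * τ) - 1)
              = 1 - Real.exp (-lam * τ) := by
            rw [mul_sub, ← Real.exp_add, mul_one]; ring_nf; rw [Real.exp_zero]
          linear_combination (c / lam * q τ) * he
  -- Tonelli swap
  have hprodm : Measurable fun pr : ℝ × ℝ => ENNReal.ofReal pr.1 * F pr :=
    (measurable_fst.ennreal_ofReal).mul hFm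
  have hswap : (∫⁻ r in Ioi 0, ENNReal.ofReal r * M r)
      = ∫⁻ τ in Ioi 0, ∫⁻ r in Ioi 0, ENNReal.ofReal r * F (r, τ) := by
    have h1 : ∀ r : ℝ, ENNReal.ofReal r * M r = ∫⁻ τ in Ioi 0, ENNReal.ofReal r * F (r, τ) :=
      fun r => (lintegral_const_mul' _ _ ENNReal.ofReal_ne_top).symm
    simp_rw [h1]
    exact lintegral_lintegral_swap hprodm.aemeasurable
  set A : ℝ := ∫ τ in Ioi 0, (c / lam) * ((1 - Real.exp (-lam * τ)) * q τ) with hAdef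
  have hAint : IntegrableOn (fun τ => (c / lam) * ((1 - Real.exp (-lam * τ)) * q τ)) (Ioi 0) := by
    apply Integrable.const_mul
    refine Integrable.mono hqi
      ((measurable_const.sub ((measurable_id.const_mul (-lam)).exp)).mul
        hq_meas).aestronglyMeasurable ?_
    refine (ae_restrict_iff' measurableSet_Ioi).2 (ae_of_all _ fun τ hτ => ?_)
    have hτ0 : (0:ℝ) < τ := hτ
    have h1 : Real.exp (-lam * τ) ≤ 1 := by rw [Real.exp_le_one_iff]; nlinarith
    have h0 : 0 < Real.exp (-lam * τ) := Real.exp_pos _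
    rw [Real.norm_eq_abs, Real.norm_eq_abs, abs_mul]
    have h3 : |1 - Real.exp (-lam * τ)| ≤ 1 := by rw [abs_le]; constructor <;> nlinarith
    nlinarith [abs_nonneg (q τ)]
  have hAnn : 0 ≤ᵐ[volume.restrict (Ioi 0)]
      fun τ => (c / lam) * ((1 - Real.exp (-lam * τ)) * q τ) := by
    refine (ae_restrict_iff' measurableSet_Ioi).2 (ae_of_all _ fun τ hτ => ?_)
    have hτ0 : (0:ℝ) < τ := hτ
    have h1 : Real.exp (-lam * τ) ≤ 1 := by rw [Real.exp_le_one_iff]; nlinarith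
    exact mul_nonneg (by positivity) (mul_nonneg (by linarith) (hq_nonneg τ hτ))
  have hT : (∫⁻ r in Ioi 0, ENNReal.ofReal r * M r) = ENNReal.ofReal A := by
    rw [hswap, setLIntegral_congr_fun measurableSet_Ioi hinner]
    exact (ofReal_integral_eq_lintegral_ofReal hAint hAnn).symm
  have hTne : (∫⁻ r in Ioi 0, ENNReal.ofReal r * M r) ≠ ⊤ := by
    rw [hT]; exact ENNReal.ofReal_ne_top
  have haefin : ∀ᵐ r ∂(volume.restrict (Ioi 0)), ENNReal.ofReal r * M r < ⊤ :=
    ae_lt_top ((measurable_id.ennreal_ofReal).mul hMm) hTne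
  have hae2 : ∀ᵐ r ∂(volume.restrict (Ioi 0)),
      ENNReal.ofReal (r * (M r).toReal) = ENNReal.ofReal r * M r := by
    filter_upwards [haefin, self_mem_ae_restrict measurableSet_Ioi] with r h1 h2
    have hr0 : (0:ℝ) < r := h2
    have hM : M r ≠ ⊤ := by
      intro h
      rw [h, ENNReal.mul_top (ENNReal.ofReal_pos.2 hr0).ne'] at h1
      exact absurd h1 (lt_irrefl _)
    rw [ENNReal.ofReal_mul hr0.le, ENNReal.ofReal_toReal hM]
  have hA0 : 0 ≤ A := by
    rw [hAdef]; exact integral_nonneg_of_ae hAnn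
  have hR : ∫ r in Ioi 0, r * g r = A := by
    have he : EqOn (fun r : ℝ => r * g r) (fun r : ℝ => r * (M r).toReal) (Ioi 0) :=
      fun r hr => by simp only []; rw [hgM r hr]
    rw [setIntegral_congr_fun measurableSet_Ioi he]
    rw [integral_eq_lintegral_of_nonneg_ae
      ((ae_restrict_iff' measurableSet_Ioi).2 (ae_of_all _ fun r hr =>
        mul_nonneg (le_of_lt hr) ENNReal.toReal_nonneg))
      ((measurable_id'.mul hMm.ennreal_toReal).aestronglyMeasurable)]
    rw [lintegral_congr_ae hae2, hT, ENNReal.toReal_ofReal hA0]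
  -- polar coordinates
  have hball : (volume (Metric.ball (0 : EuclideanSpace ℝ (Fin 2)) 1)).toReal = π := by
    rw [EuclideanSpace.volume_ball]
    simp only [Fintype.card_fin]
    norm_num
    exact Real.sq_sqrt Real.pi_nonneg
  have hpolar : ∫ x : EuclideanSpace ℝ (Fin 2), g ‖x‖ = 2 * (π * A) := by
    rw [MeasureTheory.integral_fun_norm_addHaar (volume : Measure (EuclideanSpace ℝ (Fin 2))) g]
    simp only [finrank_euclideanSpace_fin, hball, smul_eq_mul, nsmul_eq_mul, pow_one,
      Nat.cast_ofNat]
    norm_num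
    rw [hR]
    rw [measureReal_def, hball]
  -- assemble
  have hPg : ∫ x : EuclideanSpace ℝ (Fin 2), p x
      = (lam / (2 * π * c)) * ∫ x : EuclideanSpace ℝ (Fin 2), g ‖x‖ := by
    rw [← integral_const_mul]
    refine integral_congr_ae (ae_of_all _ fun x => ?_)
    rw [hp x, hgdef]
  rw [hPg, hpolar]
  have hsplit : A = (c / lam) * (1 - ∫ τ in Ioi 0, Real.exp (-lam * τ) * q τ) := by
    rw [hAdef, integral_const_mul]
    congr 1
    have h1 : EqOn (fun τ : ℝ => (1 - Real.exp (-lam * τ)) * q τ)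
        (fun τ : ℝ => q τ - Real.exp (-lam * τ) * q τ) (Ioi 0) := fun τ _ => by ring
    rw [setIntegral_congr_fun measurableSet_Ioi h1, integral_sub hqi hexpqi, hq_int]
  rw [hsplit]
  have hπ : (π:ℝ) ≠ 0 := Real.pi_ne_zero
  field_simp
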